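/- Let f : [0,1] → [0,1] be defined by f(x) = 3x for 0 ≤ x < 1/6, f(x) = 3x − 1/2 for 1/6 ≤ x < 1/2, f(x) = 3x − 1 for 1/2 ≤ x < 2/3, f(x) = 3x − 3/2 for 2/3 ≤ x < 5/6, and f(x) = 3x − 2 for 5/6 ≤ x ≤ 1, and let (Σ_f,σ) be its symbolic space on the alphabet {0,1,2,3,4}. Then Σ_f = { ω ∈ {0,1,2,3,4}^ℕ : there exists N ∈ ℕ ∪ {∞} such that ω_k ∈ {0,1} for all k < N, ω_k ∈ {2,3,4} for all k ≥ N, and if 0 < N < ∞ then ω_{N−1} = 1 } (equivalently, the language of Σ_f is the set of all subwords of words of the form w1v with w ∈ {0,1}^* and v ∈ {2,3,4}^*), and (Σ_f,σ) satisfies the one-way specification property with the sets X_1 = {0,1}^ℕ and X_2 = {2,3,4}^ℕ. -/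

import Mathlib

open MeasureTheory Filter Topology Set
open scoped ENNReal NNReal

attribute [local instance] Classical.propDecidable

noncomputable section

namespace OneWaySpec

/-! ### Empirical measures and the level-2 large deviation principle -/

/-- The empirical measure `(1/n) ∑_{j<n} δ_{f^j x}` (as a plain measure). -/
noncomputable def empMeas {Y : Type*} [MeasurableSpace Y] (f : Y → Y) (x : Y) (n : ℕ) :
    Measure Y :=
  (n : ℝ≥0∞)⁻¹ • ∑ j ∈ Finset.range n, Measure.dirac (f^[j] x)

lemma empMeas_isProbabilityMeasure {Y : Type*} [MeasurableSpace Y] (f : Y → Y) (x : Y)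
    {n : ℕ} (hn : n ≠ 0) : IsProbabilityMeasure (empMeas f x n) := by
  constructor
  rw [empMeas, Measure.smul_apply, Measure.finset_sum_apply]
  simp only [measure_univ, Finset.sum_const, Finset.card_range, nsmul_eq_mul, mul_one]
  exact ENNReal.inv_mul_cancel (by exact_mod_cast hn) (ENNReal.natCast_ne_top n)

/-- The empirical measure `E_n(x) = (1/n) ∑_{j<n} δ_{f^j x}` as a probability measure
(junk value `δ_x` for `n = 0`). -/
noncomputable def empPM {Y : Type*} [MeasurableSpace Y] (f : Y → Y) (x : Y) (n : ℕ) :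
    ProbabilityMeasure Y :=
  if hn : n = 0 then ⟨Measure.dirac x, inferInstance⟩
  else ⟨empMeas f x n, empMeas_isProbabilityMeasure f x hn⟩

/-- `(X,f)` satisfies a level-2 large deviation principle with reference measure `m`
and rate function `q`. -/
def LevelTwoLDP {Y : Type*} [MeasurableSpace Y] [TopologicalSpace Y] [OpensMeasurableSpace Y]
    (f : Y → Y) (m : Measure Y) (q : ProbabilityMeasure Y → EReal) : Prop :=
  UpperSemicontinuous q ∧ (∀ μ, q μ ≤ 0) ∧
  (∀ G : Set (ProbabilityMeasure Y), IsOpen G →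
    ⨆ μ ∈ G, q μ ≤ atTop.liminf fun n : ℕ =>
      (((n : ℝ)⁻¹ : ℝ) : EReal) * ENNReal.log (m {x | empPM f x n ∈ G})) ∧
  (∀ F : Set (ProbabilityMeasure Y), IsClosed F →
    (atTop.limsup fun n : ℕ =>
      (((n : ℝ)⁻¹ : ℝ) : EReal) * ENNReal.log (m {x | empPM f x n ∈ F})) ≤ ⨆ μ ∈ F, q μ)

/-! ### Measure-theoretic (Kolmogorov–Sinai) entropy and free energy -/

/-- Shannon entropy of the finite partition of `Y` induced by `P : Y → ι`. -/
noncomputable def partEnt {Y : Type*} [MeasurableSpace Y] (μ : Measure Y)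
    {ι : Type*} [Fintype ι] (P : Y → ι) : ℝ :=
  ∑ a : ι, Real.negMulLog ((μ (P ⁻¹' {a})).toReal)

/-- Kolmogorov–Sinai entropy of `μ` for `f` : the supremum over finite measurable partitions
`P` of the limit of `(1/n) H_μ(⋁_{j<n} f^{-j} P)`. -/
noncomputable def ksEntropy {Y : Type*} [MeasurableSpace Y] (f : Y → Y) (μ : Measure Y) :
    EReal :=
  ⨆ (k : ℕ) (P : Y → Fin k) (_ : ∀ a, MeasurableSet (P ⁻¹' {a})),
    atTop.limsup fun n : ℕ =>
      ((((n : ℝ)⁻¹ * partEnt μ fun x => fun j : Fin n => P (f^[j] x)) : ℝ) : EReal)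

/-- The free energy `F_φ(μ) = h(μ) - ∫ φ dμ` for `f`-invariant `μ`, and `-∞` otherwise. -/
noncomputable def freeEnergy {Y : Type*} [MeasurableSpace Y] (f : Y → Y) (φ : Y → ℝ)
    (μ : ProbabilityMeasure Y) : EReal :=
  if (μ : Measure Y).map f = (μ : Measure Y) then
    ksEntropy f (μ : Measure Y) - (((∫ x, φ x ∂(μ : Measure Y)) : ℝ) : EReal)
  else ⊥

/-! ### Non-wandering sets, Bowen balls and the one-way specification properties -/

/-- The non-wandering set of the restriction of `f` to `X` (relative neighborhoods). -/
def nonWanderingIn {Y : Type*} [TopologicalSpace Y] (f : Y → Y) (X : Set Y) : Set Y :=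
  {x ∈ X | ∀ U ∈ nhds x, ∃ n > 0, ∃ y ∈ U ∩ X, f^[n] y ∈ U ∩ X}

/-- Bowen ball `B_n(x,ε)`. -/
def bowenBall {Y : Type*} [PseudoMetricSpace Y] (f : Y → Y) (n : ℕ) (x : Y) (ε : ℝ) :
    Set Y :=
  {y | ∀ j < n, dist (f^[j] x) (f^[j] y) ≤ ε}

/-- `∑_{t<j} (n_t + M_t)`. -/
def gapSum {k : ℕ} (n M : Fin k → ℕ) (j : Fin k) : ℕ :=
  ∑ t ∈ Finset.Iio j, (n t + M t)

/-- One-way specification property of `f` on `X` with the family of sets `Xs`,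
with respect to the distance function `d`. -/
def OneWaySpecWithOn {Y : Type*} [TopologicalSpace Y] (d : Y → Y → ℝ) (f : Y → Y)
    (X : Set Y) {q : ℕ} (Xs : Fin q → Set Y) : Prop :=
  (∀ i, Xs i ⊆ X) ∧ (∀ i, IsCompact (Xs i)) ∧ (∀ i, f '' Xs i ⊆ Xs i) ∧
  nonWanderingIn f X = (⋃ i, Xs i) ∧
  ∀ ε > (0:ℝ), ∃ M : ℕ, ∀ (k : ℕ) (idx : Fin k → Fin q), Monotone idx →
    ∀ x : Fin k → Y, (∀ j, x j ∈ Xs (idx j)) →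
    ∀ n : Fin k → ℕ, (∀ j, 1 ≤ n j) →
    ∃ y ∈ X, ∀ (j : Fin k), ∀ i < n j,
      d (f^[i] (x j)) (f^[i + gapSum n (fun _ => M) j] y) ≤ ε

/-- One-way (W)-specification property of `f` on `X` with the family of sets `Xs`,
with respect to the distance function `d`. -/
def OneWayWSpecWithOn {Y : Type*} [TopologicalSpace Y] (d : Y → Y → ℝ) (f : Y → Y)
    (X : Set Y) {q : ℕ} (Xs : Fin q → Set Y) : Prop :=
  (∀ i, Xs i ⊆ X) ∧ (∀ i, IsCompact (Xs i)) ∧ (∀ i, f '' Xs i ⊆ Xs i) ∧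
  nonWanderingIn f X = (⋃ i, Xs i) ∧
  ∀ ε > (0:ℝ), ∃ M : ℕ, ∀ (k : ℕ) (idx : Fin k → Fin q), Monotone idx →
    ∀ x : Fin k → Y, (∀ j, x j ∈ Xs (idx j)) →
    ∀ n : Fin k → ℕ, (∀ j, 1 ≤ n j) →
    ∃ y ∈ X, ∃ Ms : Fin k → ℕ, (∀ t, Ms t ≤ M) ∧
      ∀ (j : Fin k), ∀ i < n j,
        d (f^[i] (x j)) (f^[i + gapSum n Ms j] y) ≤ ε

/-- One-way specification property of `f` on `X`. -/
def OneWaySpecOn {Y : Type*} [TopologicalSpace Y] (d : Y → Y → ℝ) (f : Y → Y)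
    (X : Set Y) : Prop :=
  ∃ (q : ℕ) (Xs : Fin q → Set Y), OneWaySpecWithOn d f X Xs

/-- One-way (W)-specification property of `f` on `X`. -/
def OneWayWSpecOn {Y : Type*} [TopologicalSpace Y] (d : Y → Y → ℝ) (f : Y → Y)
    (X : Set Y) : Prop :=
  ∃ (q : ℕ) (Xs : Fin q → Set Y), OneWayWSpecWithOn d f X Xs

/-! ### Symbolic dynamics -/

/-- The one-sided shift map. -/
def shift {A : Type*} : (ℕ → A) → (ℕ → A) := fun ω n => ω (n + 1)

/-- The standard metric `d(ω,ω') = 2^{-min{k : ω_k ≠ ω'_k}}` on sequence spaces. -/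
noncomputable def seqDist {A : Type*} [DecidableEq A] (x y : ℕ → A) : ℝ :=
  if h : x = y then 0 else (2 : ℝ)⁻¹ ^ Nat.find (Function.ne_iff.mp h)

/-- The (ambient) cylinder set of a finite word `w`. -/
def cylO {A : Type*} (w : List A) : Set (ℕ → A) :=
  {ω | ∀ (k : ℕ) (h : k < w.length), ω k = w.get ⟨k, h⟩}

/-- `w` belongs to the language of the subshift `X`. -/
def InLang {A : Type*} (X : Set (ℕ → A)) (w : List A) : Prop :=
  (X ∩ cylO w).Nonempty

/-- The concatenation `w_0 v_0 w_1 v_1 ⋯ v_{k-2} w_{k-1}`. -/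
def joinWords {A : Type*} {k : ℕ} (w v : Fin k → List A) : List A :=
  (List.ofFn fun j : Fin k => if (j : ℕ) = k - 1 then w j else w j ++ v j).flatten

end OneWaySpec
namespace OneWaySpec

/-! ### The `(-β)`-transformation -/

/-- `b = max{k ∈ ℤ : k < β}` for `β > 1`. -/
noncomputable def bOf (β : ℝ) : ℕ := ⌈β⌉₊ - 1

/-- The map `x ↦ -βx + ⌊βx⌋ + 1`, which agrees with the `(-β)`-transformation away from
the branch points `{0, 1/β, …, b/β, 1}`. -/
noncomputable def Tpre (β : ℝ) (x : ℝ) : ℝ := -(β * x) + ⌊β * x⌋ + 1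

/-- Symbol of `x`: the `i` with `x ∈ I_i = (i/β, (i+1)/β)` (junk at branch points). -/
noncomputable def symI (β : ℝ) (x : ℝ) : ℕ := (⌊β * x⌋).toNat

/-- The branch-point set `{0, 1/β, …, b/β, 1}`. -/
def bdry (β : ℝ) : Set ℝ := {y | ∃ i : ℕ, i ≤ bOf β ∧ y = (i : ℝ) / β} ∪ {1}

/-- Points of `[0,1]` whose orbit never meets the branch points. -/
def goodPre (β : ℝ) : Set ℝ := {x ∈ Set.Icc (0:ℝ) 1 | ∀ k : ℕ, (Tpre β)^[k] x ∉ bdry β}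

/-- Itinerary of a good point. -/
noncomputable def itinPre (β : ℝ) (x : ℝ) : ℕ → ℕ := fun k => symI β ((Tpre β)^[k] x)

/-- `i'(1)`, the coordinatewise limit of the itineraries `i'(x)` of good points as `x → 1⁻`. -/
noncomputable def itinOne (β : ℝ) : ℕ → ℕ := fun k =>
  limUnder (nhdsWithin 1 (Set.Iio 1) ⊓ Filter.principal (goodPre β))
    (fun x => itinPre β x k)

/-- `i'(1)` is of the form `(w0)^∞`. -/
def CaseOne (β : ℝ) : Prop :=
  ∃ p : ℕ, 1 ≤ p ∧ (∀ k, itinOne β (k + p) = itinOne β k) ∧ itinOne β (p - 1) = 0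

/-- The `(-β)`-transformation `T_{-β} : [0,1] → [0,1]` (as a map of `ℝ`). -/
noncomputable def negBeta (β : ℝ) (x : ℝ) : ℝ :=
  if x = 1 then -β + bOf β + 1
  else if ∃ i : ℕ, 1 ≤ i ∧ i ≤ bOf β ∧ x = (i : ℝ) / β then (if CaseOne β then 0 else 1)
  else Tpre β x

/-- Points of `[0,1]` whose `T_{-β}`-orbit never meets the branch points. -/
def goodSet (β : ℝ) : Set ℝ := {x ∈ Set.Icc (0:ℝ) 1 | ∀ k : ℕ, (negBeta β)^[k] x ∉ bdry β}

/-- The itinerary `i'(x)` of a point under `T_{-β}`. -/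
noncomputable def itin (β : ℝ) (x : ℝ) : ℕ → ℕ := fun k => symI β ((negBeta β)^[k] x)

/-- The symbolic space `Σ_{-β}` of the `(-β)`-transformation. -/
def SigmaNegBeta (β : ℝ) : Set (ℕ → ℕ) := closure (itin β '' goodSet β)

/-- The strict alternating order on sequences. -/
def altLt (x y : ℕ → ℕ) : Prop :=
  ∃ n : ℕ, (∀ k < n, x k = y k) ∧ (if Even n then y n < x n else x n < y n)

/-- The alternating order on sequences. -/
def altLe (x y : ℕ → ℕ) : Prop := altLt x y ∨ x = y

/-- `β` is a Yrrap number: the orbit of `1` under `T_{-β}` is eventually periodic,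
i.e. `i'(1)` is eventually periodic. -/
def Yrrap (β : ℝ) : Prop :=
  ∃ u v : ℕ, 1 ≤ v ∧ ∀ k, u ≤ k → itinOne β (k + v) = itinOne β k

/-- Symbol of `x` for the half-open partition `{J_0, …, J_b}`. -/
noncomputable def symJ (β : ℝ) (x : ℝ) : ℕ :=
  if CaseOne β then (if x ≤ 1 / β then 0 else (⌈β * x⌉).toNat - 1)
  else (if x = 1 then bOf β else (⌊β * x⌋).toNat)

/-- The coding map `Φ : [0,1] → Σ_{-β}`, `(Φ x)_k = j ↔ T_{-β}^k x ∈ J_j`. -/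
noncomputable def PhiMap (β : ℝ) (x : ℝ) : ℕ → ℕ := fun k => symJ β ((negBeta β)^[k] x)

/-- `L_{-β} = L ∘ Φ^{-1}`, as a set function. -/
noncomputable def LnegBeta (β : ℝ) (s : Set (ℕ → ℕ)) : ℝ≥0∞ :=
  volume (Set.Icc (0:ℝ) 1 ∩ PhiMap β ⁻¹' s)

/-- The `(-β)`-transformation as a self-map of `[0,1]`. -/
noncomputable def negBetaI (β : ℝ) (x : Set.Icc (0:ℝ) 1) : Set.Icc (0:ℝ) 1 :=
  Set.projIcc 0 1 zero_le_one (negBeta β x)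

/-- Lebesgue measure on `[0,1]`. -/
noncomputable def lebIcc : Measure (Set.Icc (0:ℝ) 1) :=
  volume.comap Subtype.val

/-! ### Piecewise expanding interval maps and their symbolic spaces -/

/-- Symbol of `x ∈ I_j = (a_j, a_{j+1})`. -/
noncomputable def symA {p : ℕ} (a : Fin (p + 1) → ℝ) (x : ℝ) : ℕ :=
  (Finset.univ.filter fun i => a i < x).card - 1

/-- Points of `[0,1]` whose orbit never meets the branch points `S = {a_0,…,a_p}`. -/
def goodA {p : ℕ} (a : Fin (p + 1) → ℝ) (f : ℝ → ℝ) : Set ℝ :=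
  {x ∈ Set.Icc (0:ℝ) 1 | ∀ (k : ℕ) (i : Fin (p + 1)), f^[k] x ≠ a i}

/-- The itinerary of a point. -/
noncomputable def itinA {p : ℕ} (a : Fin (p + 1) → ℝ) (f : ℝ → ℝ) (x : ℝ) : ℕ → ℕ :=
  fun k => symA a (f^[k] x)

/-- The symbolic space `Σ_f` of a piecewise expanding interval map. -/
def SigmaA {p : ℕ} (a : Fin (p + 1) → ℝ) (f : ℝ → ℝ) : Set (ℕ → ℕ) :=
  closure (itinA a f '' goodA a f)

/-! ### A metric for the weak topology on measures -/

/-- The metric `D(μ,ν) = ∑_{k≥1} |∫φ_k dμ - ∫φ_k dν| / (2^{k+1}‖φ_k‖)` (indexed from `0`). -/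
noncomputable def Dmeas {Y : Type*} [MeasurableSpace Y] [TopologicalSpace Y] [CompactSpace Y]
    (φs : ℕ → C(Y, ℝ)) (μ ν : Measure Y) : ℝ :=
  ∑' k : ℕ, |(∫ x, φs k x ∂μ) - ∫ x, φs k x ∂ν| / (2 ^ (k + 2) * ‖φs k‖)

end OneWaySpec
namespace OneWaySpec

/-! ### Further auxiliary definitions -/

/-- The restriction of the shift to a shift-invariant subset. -/
def shiftRes {A : Type*} (X : Set (ℕ → A)) (h : ∀ ω ∈ X, shift ω ∈ X) : X → X :=
  fun ω => ⟨shift ω.1, h ω.1 ω.2⟩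

/-- The prefix `s_0 s_1 ⋯ s_{m-1}` of a sequence. -/
def pref (s : ℕ → ℕ) (m : ℕ) : List ℕ := (List.range m).map s

/-- The five-branch piecewise linear map of Example 3.1. -/
noncomputable def exMap (x : ℝ) : ℝ :=
  if x < 1 / 6 then 3 * x
  else if x < 1 / 2 then 3 * x - 1 / 2
  else if x < 2 / 3 then 3 * x - 1
  else if x < 5 / 6 then 3 * x - 3 / 2
  else 3 * x - 2

/-- The branch points of `exMap`. -/
noncomputable def a6 : Fin 6 → ℝ := ![0, 1 / 6, 1 / 2, 2 / 3, 5 / 6, 1]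

/-- `exMap` as a self-map of `[0,1]`. -/
noncomputable def exMapI (x : Set.Icc (0:ℝ) 1) : Set.Icc (0:ℝ) 1 :=
  Set.projIcc 0 1 zero_le_one (exMap x)

/-- `sin (2πθ)` as a function on the circle `ℝ/ℤ`. -/
noncomputable def sinC : AddCircle (1:ℝ) → ℝ :=
  Function.Periodic.lift (f := fun t : ℝ => Real.sin (2 * Real.pi * t)) (c := 1)
    (fun x => by
      simp only
      rw [show 2 * Real.pi * (x + 1) = 2 * Real.pi * x + 2 * Real.pi by ring,
        Real.sin_add_two_pi])

/-- `cos (2πθ)` as a function on the circle `ℝ/ℤ`. -/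
noncomputable def cosC : AddCircle (1:ℝ) → ℝ :=
  Function.Periodic.lift (f := fun t : ℝ => Real.cos (2 * Real.pi * t)) (c := 1)
    (fun x => by
      simp only
      rw [show 2 * Real.pi * (x + 1) = 2 * Real.pi * x + 2 * Real.pi by ring,
        Real.cos_add_two_pi])

/-- The circle map `f(θ) = θ + (1/10) sin (2πθ)` of Example 3.2. -/
noncomputable def circleF (θ : AddCircle (1:ℝ)) : AddCircle (1:ℝ) :=
  θ + ((1 / 10 * sinC θ : ℝ) : AddCircle (1:ℝ))

/-- The potential `φ = max{log f', 0}` for the circle map, `f'(θ) = 1 + (π/5) cos (2πθ)`. -/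
noncomputable def circlePhi (θ : AddCircle (1:ℝ)) : ℝ :=
  max (Real.log (1 + Real.pi / 5 * cosC θ)) 0

/-- `g_β(w)`: the minimal `i ≥ 0` such that there are a word `v` of length `i` and symbols
`0 ≤ c < d ≤ b` with `wvc, wvd` in the language of `Σ_{-β}`. -/
noncomputable def gbw (β : ℝ) (w : List ℕ) : ℕ :=
  sInf {i : ℕ | ∃ v : List ℕ, v.length = i ∧ ∃ c d : ℕ, c < d ∧ d ≤ bOf β ∧
    InLang (SigmaNegBeta β) (w ++ v ++ [c]) ∧ InLang (SigmaNegBeta β) (w ++ v ++ [d])}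

/-- `g_β(n) = sup { g_β(w) : w in the language of `Σ_{-β}`, |w| = n }`. -/
noncomputable def gbn (β : ℝ) (n : ℕ) : ℕ :=
  sSup {m : ℕ | ∃ w : List ℕ, w.length = n ∧ InLang (SigmaNegBeta β) w ∧ m = gbw β w}

end OneWaySpec
namespace OneWaySpec

/-! ### Auxiliary lemmas for Example 3.1 -/

-- stage 1: branch lemmas

/-- breakpoints as ℕ-indexed function -/
noncomputable def av : ℕ → ℝ := fun s =>
  if s = 0 then 0 else if s = 1 then 1/6 else if s = 2 then 1/2
  else if s = 3 then 2/3 else if s = 4 then 5/6 else 1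

def Lx (ω : ℕ → ℕ) : Prop :=
  ∀ k, ω k ≤ 4 ∧ (ω k = 0 → ω (k+1) ≤ 1) ∧ (2 ≤ ω k → 2 ≤ ω (k+1))

lemma av_nonneg (s : ℕ) : 0 ≤ av s := by
  unfold av; split_ifs <;> norm_num

lemma av_le_one (s : ℕ) : av s ≤ 1 := by
  unfold av; split_ifs <;> norm_num

lemma av_half_le {s : ℕ} (h : 2 ≤ s) : (1/2 : ℝ) ≤ av s := by
  unfold av; split_ifs <;> first | omega | norm_num

lemma av_le_half {s : ℕ} (h : s ≤ 2) : av s ≤ (1/2 : ℝ) := by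
  interval_cases s <;> norm_num [av]

lemma symA_eq {s : ℕ} (hs : s ≤ 4) {y : ℝ} (h1 : av s < y) (h2 : y < av (s+1)) :
    symA a6 y = s := by
  have hfil : (Finset.univ.filter fun i : Fin 6 => a6 i < y)
      = Finset.univ.filter (fun i : Fin 6 => (i : ℕ) ≤ s) := by
    apply Finset.ext
    intro i
    simp only [Finset.mem_filter, Finset.mem_univ, true_and]
    interval_cases s <;> fin_cases i <;>
      norm_num [a6, av] at h1 h2 ⊢ <;> first | linarith | omega | (rw [not_lt]; linarith)
  rw [symA, hfil]
  interval_cases s <;> simp <;> decide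

lemma exMap_eq {s : ℕ} (hs : s ≤ 4) {y : ℝ} (h1 : av s < y) (h2 : y < av (s+1)) :
    exMap y = 3*y - s/2 := by
  interval_cases s <;> norm_num [av] at h1 h2 <;>
    (unfold exMap; split_ifs <;> first | (push_cast; ring1) | (exfalso; linarith))

lemma ne_a6 {s : ℕ} (hs : s ≤ 4) {y : ℝ} (h1 : av s < y) (h2 : y < av (s+1)) :
    ∀ i : Fin 6, y ≠ a6 i := by
  intro i hy
  interval_cases s <;> fin_cases i <;> norm_num [av] at h1 h2 <;>
    norm_num [a6] at hy <;> subst hy <;> linarith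

lemma exMap_range {s : ℕ} (hs : s ≤ 4) {y : ℝ} (h1 : av s < y) (h2 : y < av (s+1)) :
    0 < exMap y ∧ exMap y < 1 ∧ (s = 0 → exMap y < 1/2) ∧ (2 ≤ s → 1/2 < exMap y) := by
  rw [exMap_eq hs h1 h2]
  interval_cases s <;> norm_num [av] at h1 h2 <;>
    exact ⟨by linarith, by linarith,
      fun h => by first | linarith | exact absurd h (by norm_num),
      fun h => by first | linarith | exact absurd h (by norm_num)⟩

lemma exists_br {y : ℝ} (h0 : 0 ≤ y) (h1 : y ≤ 1) (hb : ∀ i : Fin 6, y ≠ a6 i) :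
    ∃ s, s ≤ 4 ∧ av s < y ∧ y < av (s+1) := by
  have e0 : y ≠ 0 := by simpa [a6] using hb 0
  have e1 : y ≠ 1/6 := by simpa [a6] using hb 1
  have e2 : y ≠ 1/2 := by simpa [a6] using hb 2
  have e3 : y ≠ 2/3 := by simpa [a6] using hb 3
  have e4 : y ≠ 5/6 := by simpa [a6] using hb 4
  have e5 : y ≠ 1 := by simpa [a6] using hb 5
  have h0' : 0 < y := h0.lt_of_ne (Ne.symm e0)
  have h1' : y < 1 := h1.lt_of_ne e5
  rcases lt_or_gt_of_ne e1 with h | h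
  · exact ⟨0, by norm_num, by norm_num [av, h0'], by norm_num [av, h]⟩
  rcases lt_or_gt_of_ne e2 with h' | h'
  · exact ⟨1, by norm_num, by norm_num [av, h], by norm_num [av, h']⟩
  rcases lt_or_gt_of_ne e3 with h'' | h''
  · exact ⟨2, by norm_num, by norm_num [av, h'], by norm_num [av, h'']⟩
  rcases lt_or_gt_of_ne e4 with h3 | h3
  · exact ⟨3, by norm_num, by norm_num [av, h''], by norm_num [av, h3]⟩
  · exact ⟨4, by norm_num, by norm_num [av, h3], by norm_num [av, h1']⟩

/-- itineraries of good points satisfy the local rules -/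
lemma good_itin_Lx {x : ℝ} (hx : x ∈ goodA a6 exMap) : Lx (itinA a6 exMap x) := by
  obtain ⟨hIcc, hgood⟩ := hx
  -- every iterate lies in some open branch interval
  have key : ∀ k, ∃ s, s ≤ 4 ∧ av s < exMap^[k] x ∧ exMap^[k] x < av (s+1) := by
    intro k
    induction k with
    | zero => exact exists_br hIcc.1 hIcc.2 (fun i => hgood 0 i)
    | succ k ih =>
        obtain ⟨s, hs, hl, hr⟩ := ih
        have hr' := exMap_range hs hl hr
        rw [Function.iterate_succ_apply']
        exact exists_br (le_of_lt hr'.1) (le_of_lt hr'.2.1)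
          (fun i => Function.iterate_succ_apply' exMap k x ▸ hgood (k+1) i)
  intro k
  obtain ⟨s, hs, hl, hr⟩ := key k
  obtain ⟨s', hs', hl', hr'⟩ := key (k+1)
  have hik : itinA a6 exMap x k = s := symA_eq hs hl hr
  have hik' : itinA a6 exMap x (k+1) = s' := symA_eq hs' hl' hr'
  have hnext : exMap^[k+1] x = exMap (exMap^[k] x) := Function.iterate_succ_apply' _ _ _
  have hrange := exMap_range hs hl hr
  rw [hik, hik']
  refine ⟨hs, fun h0 => ?_, fun h2 => ?_⟩
  · -- s = 0 : next value < 1/2, so s' ≤ 1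
    have hv : exMap^[k+1] x < 1/2 := by rw [hnext]; exact hrange.2.2.1 h0
    by_contra hc
    push_neg at hc
    have : (1/2:ℝ) ≤ av s' := av_half_le hc
    linarith
  · -- 2 ≤ s : next value > 1/2, so 2 ≤ s'
    have hv : (1/2:ℝ) < exMap^[k+1] x := by rw [hnext]; exact hrange.2.2.2 h2
    by_contra hc
    push_neg at hc
    have : av (s'+1) ≤ (1/2:ℝ) := av_le_half (by omega)
    linarith

lemma exMap_quarter : exMap (1/4 : ℝ) = 1/4 := by norm_num [exMap]
lemma exMap_threeq : exMap (3/4 : ℝ) = 3/4 := by norm_num [exMap]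

lemma iter_fix {z : ℝ} (hz : exMap z = z) : ∀ k, exMap^[k] z = z := by
  intro k
  induction k with
  | zero => rfl
  | succ k ih => rw [Function.iterate_succ_apply', ih, hz]

lemma quarter_good : (1/4 : ℝ) ∈ goodA a6 exMap := by
  refine ⟨by norm_num, fun k i => ?_⟩
  rw [iter_fix exMap_quarter k]
  fin_cases i <;> norm_num [a6]

lemma threeq_good : (3/4 : ℝ) ∈ goodA a6 exMap := by
  refine ⟨by norm_num, fun k i => ?_⟩
  rw [iter_fix exMap_threeq k]
  fin_cases i <;> norm_num [a6]

lemma good_step {z : ℝ} (hz0 : 0 ≤ z) (hz1 : z ≤ 1) (hne : ∀ i : Fin 6, z ≠ a6 i)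
    (hstep : exMap z ∈ goodA a6 exMap) : z ∈ goodA a6 exMap := by
  refine ⟨⟨hz0, hz1⟩, fun k i => ?_⟩
  cases k with
  | zero => exact hne i
  | succ k => rw [Function.iterate_succ_apply]; exact hstep.2 k i

lemma Lx_shift {ω : ℕ → ℕ} (h : Lx ω) : Lx (shift ω) := fun k => h (k+1)

/-- realization of admissible prefixes by good points, with control of the branch interval -/
lemma realize (m : ℕ) : ∀ ω : ℕ → ℕ, Lx ω →
    ∃ z ∈ goodA a6 exMap, (av (ω 0) < z ∧ z < av (ω 0 + 1)) ∧
      ∀ k < m, itinA a6 exMap z k = ω k := by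
  induction m with
  | zero =>
      intro ω hL
      have hs : ω 0 ≤ 4 := (hL 0).1
      have h04 : (0:ℕ) ≤ 4 := by norm_num
      -- pick a good point in branch (ω 0)
      have : ∃ z ∈ goodA a6 exMap, av (ω 0) < z ∧ z < av (ω 0 + 1) := by
        interval_cases h : (ω 0)
        · refine ⟨1/12, ?_, by norm_num [av], by norm_num [av]⟩
          exact good_step (by norm_num) (by norm_num)
            (fun i => by fin_cases i <;> norm_num [a6])
            (by rw [show exMap (1/12 : ℝ) = 1/4 by norm_num [exMap]]; exact quarter_good)
        · exact ⟨1/4, quarter_good, by norm_num [av], by norm_num [av]⟩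
        · refine ⟨7/12, ?_, by norm_num [av], by norm_num [av]⟩
          exact good_step (by norm_num) (by norm_num)
            (fun i => by fin_cases i <;> norm_num [a6])
            (by rw [show exMap (7/12 : ℝ) = 3/4 by norm_num [exMap]]; exact threeq_good)
        · exact ⟨3/4, threeq_good, by norm_num [av], by norm_num [av]⟩
        · refine ⟨11/12, ?_, by norm_num [av], by norm_num [av]⟩
          exact good_step (by norm_num) (by norm_num)
            (fun i => by fin_cases i <;> norm_num [a6])
            (by rw [show exMap (11/12 : ℝ) = 3/4 by norm_num [exMap]]; exact threeq_good)
      obtain ⟨z, hzg, hzb⟩ := this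
      exact ⟨z, hzg, hzb, fun k hk => absurd hk (Nat.not_lt_zero k)⟩
  | succ m ih =>
      intro ω hL
      obtain ⟨z', hz'g, ⟨hz'l, hz'r⟩, hz'it⟩ := ih (shift ω) (Lx_shift hL)
      simp only [show shift ω 0 = ω 1 from rfl] at hz'l hz'r
      set s := ω 0 with hsdef
      have hs4 : s ≤ 4 := (hL 0).1
      have hs14 : ω 1 ≤ 4 := (hL 1).1
      -- z' bounds
      have hz'0 : 0 < z' := lt_of_le_of_lt (av_nonneg _) hz'l
      have hz'1 : z' < 1 := lt_of_lt_of_le hz'r (av_le_one _)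
      -- the pulled-back point
      set z : ℝ := (z' + s/2)/3 with hzdef
      -- branch membership of z
      have hbr : av s < z ∧ z < av (s+1) := by
        rcases Nat.lt_or_ge s 2 with hlt | hge
        · interval_cases s
          · -- s = 0 : need z' < 1/2
            have h01 : ω 1 ≤ 1 := (hL 0).2.1 hsdef.symm
            have : z' < 1/2 := lt_of_lt_of_le hz'r (av_le_half (by omega))
            constructor <;> norm_num [av, hzdef] <;> linarith
          · constructor <;> norm_num [av, hzdef] <;> linarith
        · -- 2 ≤ s : z' > 1/2
          have h21 : 2 ≤ ω 1 := (hL 0).2.2 (by omega)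
          have : (1/2:ℝ) < z' := lt_of_le_of_lt (av_half_le h21) hz'l
          interval_cases s <;> constructor <;> norm_num [av, hzdef] <;> linarith
      have hmap : exMap z = z' := by
        rw [exMap_eq hs4 hbr.1 hbr.2]
        push_cast [hzdef]
        ring
      have hz0 : 0 ≤ z := le_of_lt (lt_of_le_of_lt (av_nonneg _) hbr.1)
      have hz1 : z ≤ 1 := le_of_lt (lt_of_lt_of_le hbr.2 (av_le_one _))
      have hzg : z ∈ goodA a6 exMap :=
        good_step hz0 hz1 (ne_a6 hs4 hbr.1 hbr.2) (hmap ▸ hz'g)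
      refine ⟨z, hzg, hbr, fun k hk => ?_⟩
      cases k with
      | zero => exact symA_eq hs4 hbr.1 hbr.2
      | succ k =>
          have : itinA a6 exMap z (k+1) = itinA a6 exMap z' k := by
            unfold itinA
            rw [Function.iterate_succ_apply, hmap]
          rw [this, hz'it k (by omega)]
          rfl

lemma isClosed_Lx : IsClosed {ω : ℕ → ℕ | Lx ω} := by
  have : {ω : ℕ → ℕ | Lx ω} = ⋂ k : ℕ,
      (((fun ω : ℕ → ℕ => ω k) ⁻¹' {n | n ≤ 4}) ∩
       (((fun ω : ℕ → ℕ => ω k) ⁻¹' {n | n ≠ 0}) ∪ ((fun ω : ℕ → ℕ => ω (k+1)) ⁻¹' {n | n ≤ 1})) ∩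
       (((fun ω : ℕ → ℕ => ω k) ⁻¹' {n | ¬ 2 ≤ n}) ∪ ((fun ω : ℕ → ℕ => ω (k+1)) ⁻¹' {n | 2 ≤ n}))) := by
    ext ω
    simp only [Set.mem_setOf_eq, Set.mem_iInter, Set.mem_inter_iff, Set.mem_union,
      Set.mem_preimage, Set.mem_setOf_eq, Lx]
    constructor
    · intro h k
      obtain ⟨h1, h2, h3⟩ := h k
      exact ⟨⟨h1, by tauto⟩, by tauto⟩
    · intro h k
      obtain ⟨⟨h1, h2⟩, h3⟩ := h k
      exact ⟨h1, by tauto, by tauto⟩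
  rw [this]
  refine isClosed_iInter fun k => ?_
  refine IsClosed.inter (IsClosed.inter ?_ (IsClosed.union ?_ ?_)) (IsClosed.union ?_ ?_) <;>
    exact IsClosed.preimage (continuous_apply _) (isClosed_discrete _)

lemma cyl_mem_nhds {ω : ℕ → ℕ} {U : Set (ℕ → ℕ)} (hU : U ∈ nhds ω) :
    ∃ m, {y : ℕ → ℕ | ∀ k < m, y k = ω k} ⊆ U := by
  rw [nhds_pi, Filter.mem_pi] at hU
  obtain ⟨I, hIfin, t, ht, hsub⟩ := hU
  obtain ⟨m, hm⟩ : ∃ m : ℕ, ∀ i ∈ I, i < m := by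
    rcases hIfin.bddAbove with ⟨b, hb⟩
    exact ⟨b+1, fun i hi => Nat.lt_succ_of_le (hb hi)⟩
  refine ⟨m, fun y hy => hsub fun i hi => ?_⟩
  rw [hy i (hm i hi)]
  exact mem_of_mem_nhds (ht i)

lemma isOpen_cyl (ω : ℕ → ℕ) (m : ℕ) : IsOpen {y : ℕ → ℕ | ∀ k < m, y k = ω k} := by
  have : {y : ℕ → ℕ | ∀ k < m, y k = ω k}
      = ⋂ k ∈ Finset.range m, ((fun y : ℕ → ℕ => y k) ⁻¹' {ω k}) := by
    ext y
    simp [Finset.mem_range]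
  rw [this]
  exact isOpen_biInter_finset fun k _ =>
    IsOpen.preimage (continuous_apply _) (isOpen_discrete _)

lemma SigmaA_eq_Lx : SigmaA (p := 5) a6 exMap = {ω | Lx ω} := by
  apply Set.Subset.antisymm
  · apply closure_minimal _ isClosed_Lx
    rintro ω ⟨x, hx, rfl⟩
    exact good_itin_Lx hx
  · intro ω hω
    rw [SigmaA, mem_closure_iff_nhds]
    intro U hU
    obtain ⟨m, hm⟩ := cyl_mem_nhds hU
    obtain ⟨z, hzg, _, hit⟩ := realize m ω hω
    exact ⟨itinA a6 exMap z, hm (fun k hk => hit k hk), ⟨z, hzg, rfl⟩⟩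

/-- once ≥ 2, always ≥ 2 -/
lemma Lx_ge2_mono {ω : ℕ → ℕ} (h : Lx ω) {N : ℕ} (hN : 2 ≤ ω N) :
    ∀ k, N ≤ k → 2 ≤ ω k := by
  have key : ∀ d, 2 ≤ ω (N + d) := by
    intro d
    induction d with
    | zero => exact hN
    | succ d ih => rw [← Nat.add_assoc]; exact (h (N+d)).2.2 ih
  intro k hk
  obtain ⟨d, rfl⟩ := Nat.exists_eq_add_of_le hk
  exact key d

lemma Lx_iff_desc (ω : ℕ → ℕ) : Lx ω ↔
    ((∃ N : ℕ, (∀ k < N, ω k = 0 ∨ ω k = 1) ∧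
        (∀ k, N ≤ k → ω k = 2 ∨ ω k = 3 ∨ ω k = 4) ∧
        (0 < N → ω (N - 1) = 1)) ∨
      (∀ k, ω k = 0 ∨ ω k = 1)) := by
  constructor
  · intro hL
    by_cases hall : ∀ k, ω k ≤ 1
    · exact Or.inr fun k => by have := hall k; omega
    · push_neg at hall
      obtain ⟨k0, hk0⟩ := hall
      have hex : ∃ k, 2 ≤ ω k := ⟨k0, by omega⟩
      left
      refine ⟨Nat.find hex, fun k hk => ?_, fun k hk => ?_, fun hpos => ?_⟩
      · have := Nat.find_min hex hk
        omega
      · have h2 := Lx_ge2_mono hL (Nat.find_spec hex) k hk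
        have h4 := (hL k).1
        omega
      · have hlt : Nat.find hex - 1 < Nat.find hex := by omega
        have hle1 : ¬ 2 ≤ ω (Nat.find hex - 1) := Nat.find_min hex hlt
        have hne0 : ω (Nat.find hex - 1) ≠ 0 := by
          intro h0
          have := (hL (Nat.find hex - 1)).2.1 h0
          have heq : Nat.find hex - 1 + 1 = Nat.find hex := by omega
          rw [heq] at this
          have := Nat.find_spec hex
          omega
        omega
  · rintro (⟨N, h01, h234, hlast⟩ | hall)
    · intro k
      rcases Nat.lt_or_ge k N with hk | hk
      · have hk01 := h01 k hk
        refine ⟨by omega, fun h0 => ?_, by omega⟩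
        · rcases Nat.lt_or_ge (k+1) N with hk1 | hk1
          · have := h01 (k+1) hk1
            omega
          · -- k+1 ≥ N and k < N so k = N-1
            have h1' : ω (N-1) = 1 := hlast (by omega)
            have hk' : k = N - 1 := by omega
            rw [hk'] at h0
            omega
      · have := h234 k hk
        have h1 := h234 (k+1) (by omega)
        exact ⟨by omega, by omega, by omega⟩
    · intro k
      have := hall k
      have := hall (k+1)
      exact ⟨by omega, by omega, by omega⟩

lemma shift_iter {A : Type*} (u : ℕ → A) (a k : ℕ) : (shift^[a] u) k = u (k + a) := by
  induction a generalizing u with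
  | zero => rfl
  | succ a ih =>
      rw [Function.iterate_succ_apply, ih]
      show u (k + a + 1) = u (k + (a + 1))
      rw [Nat.add_assoc]

lemma seqDist_le_of_agree {u v : ℕ → ℕ} {m : ℕ} (h : ∀ s < m, u s = v s) :
    seqDist u v ≤ (2⁻¹:ℝ)^m := by
  unfold seqDist
  split_ifs with he
  · positivity
  · apply pow_le_pow_of_le_one (by norm_num) (by norm_num)
    by_contra hlt
    push_neg at hlt
    exact (Nat.find_spec (Function.ne_iff.mp he)) (h _ hlt)

def X1 : Set (ℕ → ℕ) := {ω | ∀ k, ω k = 0 ∨ ω k = 1}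
def X2 : Set (ℕ → ℕ) := {ω | ∀ k, ω k = 2 ∨ ω k = 3 ∨ ω k = 4}

lemma X1_sub_Lx : X1 ⊆ {ω | Lx ω} := by
  intro ω h k
  have h1 := h k; have h2 := h (k+1)
  exact ⟨by omega, by omega, by omega⟩

lemma X2_sub_Lx : X2 ⊆ {ω | Lx ω} := by
  intro ω h k
  have h1 := h k; have h2 := h (k+1)
  exact ⟨by omega, by omega, by omega⟩

lemma Lx_shift_iter {ω : ℕ → ℕ} (h : Lx ω) (a : ℕ) : Lx (shift^[a] ω) := by
  induction a with
  | zero => exact h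
  | succ a ih => rw [Function.iterate_succ_apply']; exact Lx_shift ih

lemma nonwandering_eq :
    nonWanderingIn shift (SigmaA (p := 5) a6 exMap) = X1 ∪ X2 := by
  rw [SigmaA_eq_Lx]
  apply Set.Subset.antisymm
  · rintro ω ⟨hωL, hω⟩
    by_cases hall : ∀ k, ω k ≤ 1
    · left; intro k; have := (hωL k).1; have := hall k; omega
    · push_neg at hall
      obtain ⟨k0, hk0⟩ := hall
      have hex : ∃ k, 2 ≤ ω k := ⟨k0, by omega⟩
      set N := Nat.find hex with hNdef
      rcases Nat.eq_zero_or_pos N with hN0 | hNpos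
      · -- all ≥ 2 from the start
        right; intro k
        have hspec : 2 ≤ ω N := Nat.find_spec hex
        have h2 := Lx_ge2_mono hωL hspec k (by omega)
        have := (hωL k).1
        omega
      · -- contradiction with nonwandering
        exfalso
        set U := {y : ℕ → ℕ | ∀ k < N + 1, y k = ω k} with hUdef
        have hUnhds : U ∈ nhds ω := (isOpen_cyl ω (N+1)).mem_nhds (fun k _ => rfl)
        obtain ⟨n, hn, y, ⟨hyU, hyL⟩, hyn⟩ := hω U hUnhds
        have hyN : 2 ≤ y N := by
          rw [hyU N (by omega)]
          exact Nat.find_spec hex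
        have h2 : 2 ≤ y (N - 1 + n) := Lx_ge2_mono hyL hyN _ (by omega)
        have hlt : ¬ 2 ≤ ω (N - 1) := Nat.find_min hex (by omega)
        have := hyn.1 (N-1) (by omega)
        rw [shift_iter] at this
        omega
  · intro ω hω
    have hωL : Lx ω := by
      rcases hω with h | h
      · exact X1_sub_Lx h
      · exact X2_sub_Lx h
    refine ⟨hωL, fun U hU => ?_⟩
    obtain ⟨m, hm⟩ := cyl_mem_nhds hU
    set y : ℕ → ℕ := fun k => ω (k % (m+1)) with hydef
    have hyX : y ∈ X1 ∪ X2 := by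
      rcases hω with h | h
      · exact Or.inl fun k => h _
      · exact Or.inr fun k => h _
    have hyL : Lx y := by
      rcases hyX with h | h
      · exact X1_sub_Lx h
      · exact X2_sub_Lx h
    have hyU : y ∈ U := by
      apply hm
      intro k hk
      simp only [hydef]
      rw [Nat.mod_eq_of_lt (by omega)]
    have hyU' : shift^[m+1] y ∈ U := by
      apply hm
      intro k hk
      rw [shift_iter]
      simp only [hydef]
      rw [Nat.add_mod_right, Nat.mod_eq_of_lt (by omega)]
    have hyf : shift^[m+1] y ∈ {ω | Lx ω} := Lx_shift_iter hyL (m+1)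
    exact ⟨m+1, by omega, y, ⟨hyU, hyL⟩, hyU', hyf⟩

lemma spec_main : ∀ ε > (0:ℝ), ∃ M : ℕ, ∀ (k : ℕ) (idx : Fin k → Fin 2), Monotone idx →
    ∀ x : Fin k → (ℕ → ℕ), (∀ j, x j ∈ (![X1, X2] : Fin 2 → Set (ℕ → ℕ)) (idx j)) →
    ∀ n : Fin k → ℕ, (∀ j, 1 ≤ n j) →
    ∃ y ∈ SigmaA (p := 5) a6 exMap, ∀ (j : Fin k), ∀ i < n j,
      seqDist (shift^[i] (x j)) (shift^[i + gapSum n (fun _ => M) j] y) ≤ ε := by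
  intro ε hε
  obtain ⟨m0, hm0⟩ := exists_pow_lt_of_lt_one hε (show (2⁻¹:ℝ) < 1 by norm_num)
  set m := m0 + 1 with hmdef
  refine ⟨m + 1, ?_⟩
  intro k idx hmono x hx n hn
  -- ℕ-indexed versions
  set n' : ℕ → ℕ := fun t => if h : t < k then n ⟨t, h⟩ else 1 with hn'def
  set sv : ℕ → ℕ := fun t => if h : t < k then (idx ⟨t, h⟩ : ℕ) else 0 with hsvdef
  set xf : ℕ → ℕ → ℕ := fun t => if h : t < k then x ⟨t, h⟩ else fun _ => 2 with hxfdef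
  set G : ℕ → ℕ := fun r => ∑ t ∈ Finset.range r, (n' t + (m + 1)) with hGdef
  have hG0 : G 0 = 0 := Finset.sum_range_zero _
  have hGsucc : ∀ r, G (r + 1) = G r + (n' r + (m + 1)) := fun r => Finset.sum_range_succ _ r
  have hGmono : StrictMono G := strictMono_nat_of_lt_succ fun r => by rw [hGsucc]; omega
  -- properties of each block's data
  have hx' : ∀ t (h : t < k), (sv t = 0 ∧ ∀ r, xf t r ≤ 1) ∨
      (sv t = 1 ∧ ∀ r, 2 ≤ xf t r ∧ xf t r ≤ 4) := by
    intro t h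
    have hxj := hx ⟨t, h⟩
    have hsv : sv t = (idx ⟨t, h⟩ : ℕ) := dif_pos h
    have hxf : xf t = x ⟨t, h⟩ := dif_pos h
    rcases hj : idx ⟨t, h⟩ with ⟨iv, hiv⟩
    interval_cases iv
    · left
      rw [hj] at hxj
      have hxj' : x ⟨t, h⟩ ∈ X1 := by simpa [Matrix.cons_val_zero] using hxj
      exact ⟨by rw [hsv, hj], fun r => by rw [hxf]; have := hxj' r; omega⟩
    · right
      rw [hj] at hxj
      have hxj' : x ⟨t, h⟩ ∈ X2 := by simpa [Matrix.cons_val_one, Matrix.head_cons] using hxj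
      exact ⟨by rw [hsv, hj], fun r => by rw [hxf]; have := hxj' r; omega⟩
  -- block locator
  set bj : ℕ → ℕ := fun p => Nat.findGreatest (fun j => G j ≤ p) k with hbjdef
  have hbj_le : ∀ p, G (bj p) ≤ p := fun p =>
    Nat.findGreatest_spec (P := fun j => G j ≤ p) (Nat.zero_le k) (by omega)
  have hbj_lt : ∀ p, p < G k → bj p < k := by
    intro p hp
    have h1 : bj p ≤ k := Nat.findGreatest_le k
    rcases Nat.lt_or_ge (bj p) k with h | h
    · exact h
    · exfalso
      have heq : bj p = k := by omega
      have h2 := hbj_le p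
      rw [heq] at h2
      omega
  have hbj_ub : ∀ p, p < G k → p < G (bj p + 1) := by
    intro p hp
    by_contra hc
    push_neg at hc
    have h1 : bj p + 1 ≤ k := by have := hbj_lt p hp; omega
    have h5 := Nat.le_findGreatest (P := fun j => G j ≤ p) h1 hc
    have hfold : Nat.findGreatest (fun j => G j ≤ p) k = bj p := rfl
    rw [hfold] at h5
    omega
  have hbj_eq : ∀ j t, j < k → t < n' j + (m + 1) → bj (G j + t) = j := by
    intro j t hj ht
    apply le_antisymm
    · by_contra hc
      push_neg at hc
      have h1 : G (j + 1) ≤ G (bj (G j + t)) := hGmono.monotone hc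
      have h2 := hbj_le (G j + t)
      rw [hGsucc] at h1
      omega
    · exact Nat.le_findGreatest (P := fun j' => G j' ≤ G j + t) (by omega) (Nat.le_add_right _ _)
  have hin : ∀ j t, j < k → t < n' j + (m + 1) → G j + t < G k := by
    intro j t hj ht
    have h1 : G (j + 1) ≤ G k := hGmono.monotone (by omega)
    rw [hGsucc] at h1
    omega
  -- the glued point
  set y : ℕ → ℕ := fun p => if p < G k then
      (if p - G (bj p) < n' (bj p) + m then xf (bj p) (p - G (bj p))
       else (if sv (bj p) = 0 then 1 else 2))
    else 2 with hydef
  have hcopy : ∀ j t, j < k → t < n' j + m → y (G j + t) = xf j t := by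
    intro j t hj ht
    have h1 : G j + t < G k := hin j t hj (by omega)
    have h2 : bj (G j + t) = j := hbj_eq j t hj (by omega)
    simp only [hydef, if_pos h1, h2, Nat.add_sub_cancel_left, if_pos ht]
  have hglue : ∀ j, j < k → y (G j + (n' j + m)) = (if sv j = 0 then 1 else 2) := by
    intro j hj
    have h1 : G j + (n' j + m) < G k := hin j _ hj (by omega)
    have h2 : bj (G j + (n' j + m)) = j := hbj_eq j _ hj (by omega)
    simp only [hydef, if_pos h1, h2, Nat.add_sub_cancel_left]
    rw [if_neg (by omega)]
  -- values of y inside block j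
  have hval : ∀ j t, j < k → t < n' j + (m + 1) →
      (sv j = 0 → y (G j + t) ≤ 1) ∧ (sv j = 1 → 2 ≤ y (G j + t) ∧ y (G j + t) ≤ 4) := by
    intro j t hj ht
    rcases Nat.lt_or_ge t (n' j + m) with hlt | hge
    · rw [hcopy j t hj hlt]
      rcases hx' j hj with ⟨hs, hb⟩ | ⟨hs, hb⟩
      · exact ⟨fun _ => hb t, fun h1 => by rw [hs] at h1; omega⟩
      · exact ⟨fun h0 => by rw [hs] at h0; omega, fun _ => hb t⟩
    · have : t = n' j + m := by omega
      subst this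
      rw [hglue j hj]
      split_ifs with h
      · exact ⟨fun _ => by omega, fun h1 => by omega⟩
      · exact ⟨fun h0 => absurd h0 h, fun _ => by omega⟩
  -- sv is monotone in {0,1}
  have hsv01 : ∀ t, t < k → sv t = 0 ∨ sv t = 1 := by
    intro t h
    rcases hx' t h with ⟨hs, _⟩ | ⟨hs, _⟩ <;> omega
  have hsv_mono : ∀ j, j + 1 < k → sv j = 1 → sv (j + 1) = 1 := by
    intro j hj hs
    have h1 : idx ⟨j, by omega⟩ ≤ idx ⟨j + 1, hj⟩ := hmono (by simp [Fin.mk_le_mk])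
    have hsj : sv j = (idx ⟨j, by omega⟩ : ℕ) := dif_pos (by omega)
    have hsj1 : sv (j + 1) = (idx ⟨j + 1, hj⟩ : ℕ) := dif_pos hj
    have h2 : (idx ⟨j, by omega⟩ : ℕ) ≤ (idx ⟨j + 1, hj⟩ : ℕ) := h1
    have h3 : (idx ⟨j + 1, hj⟩ : ℕ) < 2 := (idx ⟨j + 1, hj⟩).isLt
    omega
  -- y satisfies the local rules
  have hLy : Lx y := by
    intro p
    rcases Nat.lt_or_ge p (G k) with hp | hp
    · set j := bj p with hjdef
      have hjk : j < k := hbj_lt p hp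
      have hpl : G j ≤ p := hbj_le p
      have hpu : p < G j + (n' j + (m + 1)) := by
        have h6 := hbj_ub p hp
        rw [hGsucc, ← hjdef] at h6
        exact h6
      have hpt : p = G j + (p - G j) := by omega
      have hvp := hval j (p - G j) hjk (by omega)
      rw [← hpt] at hvp
      rcases hsv01 j hjk with hs | hs
      · -- block of 0/1 symbols
        have hyp1 : y p ≤ 1 := hvp.1 hs
        refine ⟨by omega, fun h0 => ?_, fun h2 => by omega⟩
        -- y p = 0 : p is not the glue slot, so p+1 is still in block j
        have hnx : p - G j < n' j + m := by
          by_contra hc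
          push_neg at hc
          have h3 := hglue j hjk
          have h4 : p = G j + (n' j + m) := by omega
          rw [← h4, if_pos hs] at h3
          omega
        have hsucc : p + 1 = G j + (p - G j + 1) := by omega
        have := (hval j (p - G j + 1) hjk (by omega)).1 hs
        rw [← hsucc] at this
        omega
      · -- block of 2/3/4 symbols
        have hyp2 := hvp.2 hs
        refine ⟨by omega, fun h0 => by omega, fun _ => ?_⟩
        rcases Nat.lt_or_ge (p + 1 - G j) (n' j + (m + 1)) with hlt | hge
        · have hsucc : p + 1 = G j + (p + 1 - G j) := by omega
          have := (hval j (p + 1 - G j) hjk hlt).2 hs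
          rw [← hsucc] at this
          omega
        · -- p+1 = G (j+1)
          have hp1 : p + 1 = G (j + 1) := by
            rw [hGsucc]
            omega
          rcases Nat.lt_or_ge (j + 1) k with hj1 | hj1
          · have hs1 : sv (j + 1) = 1 := hsv_mono j hj1 hs
            have h0 : (0:ℕ) < n' (j + 1) + (m + 1) := by omega
            have := (hval (j + 1) 0 hj1 h0).2 hs1
            rw [Nat.add_zero, ← hp1] at this
            omega
          · have : G k ≤ G (j + 1) := hGmono.monotone hj1
            have hyt : y (p + 1) = 2 := by
              simp only [hydef]
              rw [if_neg (by omega)]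
            omega
    · have h1 : y p = 2 := by simp only [hydef]; rw [if_neg (by omega)]
      have h2 : y (p + 1) = 2 := by simp only [hydef]; rw [if_neg (by omega)]
      exact ⟨by omega, by omega, by omega⟩
  -- gapSum agrees with G
  have hgap : ∀ j : Fin k, gapSum n (fun _ => m + 1) j = G (j : ℕ) := by
    intro j
    rw [gapSum]
    have h1 : ∑ t ∈ Finset.Iio j, (n t + (m + 1))
        = ∑ t ∈ Finset.Iio j, (n' t.val + (m + 1)) := by
      apply Finset.sum_congr rfl
      intro t _
      have ht : n' t.val = n t := by simp only [hn'def]; rw [dif_pos t.isLt]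
      rw [ht]
    have h2 : G (j : ℕ) = ∑ t ∈ Finset.Iio (j : ℕ), (n' t + (m + 1)) := by
      simp only [hGdef, ← Nat.Iio_eq_range]
    rw [h1, h2, ← Fin.map_valEmbedding_Iio, Finset.sum_map]
    simp [Fin.valEmbedding_apply]
  refine ⟨y, ?_, ?_⟩
  · rw [SigmaA_eq_Lx]
    exact hLy
  · intro j i hi
    have hagree : ∀ s < m, (shift^[i] (x j)) s = (shift^[i + gapSum n (fun _ => m + 1) j] y) s := by
      intro s hs
      rw [shift_iter, shift_iter, hgap j]
      have hjlt : (j : ℕ) < k := j.isLt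
      have hn'j : n' (j : ℕ) = n j := by
        simp only [hn'def]
        rw [dif_pos hjlt]
      have hxfj : xf (j : ℕ) = x j := by
        simp only [hxfdef]
        rw [dif_pos hjlt]
      have hpos : s + (i + G (j : ℕ)) = G (j : ℕ) + (s + i) := by omega
      rw [hpos, hcopy (j : ℕ) (s + i) hjlt (by omega), hxfj]
    calc seqDist (shift^[i] (x j)) (shift^[i + gapSum n (fun _ => m + 1) j] y)
        ≤ (2⁻¹:ℝ)^m := seqDist_le_of_agree hagree
      _ ≤ (2⁻¹:ℝ)^m0 := pow_le_pow_of_le_one (by norm_num) (by norm_num) (by omega)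
      _ ≤ ε := le_of_lt hm0

lemma isCompact_X1 : IsCompact X1 := by
  have h : X1 = Set.pi Set.univ (fun _ : ℕ => ({0, 1} : Set ℕ)) := by
    ext ω
    simp [X1, Set.mem_univ_pi]
  rw [h]
  exact isCompact_univ_pi fun i => ((Set.finite_singleton 1).insert 0).isCompact

lemma isCompact_X2 : IsCompact X2 := by
  have h : X2 = Set.pi Set.univ (fun _ : ℕ => ({2, 3, 4} : Set ℕ)) := by
    ext ω
    simp [X2, Set.mem_univ_pi]
  rw [h]
  exact isCompact_univ_pi fun i =>
    ((Set.finite_singleton 4).insert 3 |>.insert 2).isCompact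



end OneWaySpec

open OneWaySpec in
/-- **Example 3.1.** The symbolic space of the five-branch map consists of the sequences
that are a `{0,1}`-word, followed (if the `{0,1}`-part is finite and nonempty then ending
with the symbol `1`) by a `{2,3,4}`-sequence; and it satisfies the one-way specification
property with `X₁ = {0,1}^ℕ` and `X₂ = {2,3,4}^ℕ`. -/
theorem exMap_symbolic_space_and_spec :
    (SigmaA (p := 5) a6 exMap =
      {ω : ℕ → ℕ |
        (∃ N : ℕ, (∀ k < N, ω k = 0 ∨ ω k = 1) ∧
          (∀ k, N ≤ k → ω k = 2 ∨ ω k = 3 ∨ ω k = 4) ∧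
          (0 < N → ω (N - 1) = 1)) ∨
        (∀ k, ω k = 0 ∨ ω k = 1)}) ∧
    OneWaySpecWithOn (fun ω ω' : ℕ → ℕ => seqDist ω ω') shift (SigmaA (p := 5) a6 exMap)
      ![{ω : ℕ → ℕ | ∀ k, ω k = 0 ∨ ω k = 1},
        {ω : ℕ → ℕ | ∀ k, ω k = 2 ∨ ω k = 3 ∨ ω k = 4}] := by
  have hX1 : {ω : ℕ → ℕ | ∀ k, ω k = 0 ∨ ω k = 1} = X1 := rfl
  have hX2 : {ω : ℕ → ℕ | ∀ k, ω k = 2 ∨ ω k = 3 ∨ ω k = 4} = X2 := rfl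
  constructor
  · ext ω
    rw [SigmaA_eq_Lx]
    exact Lx_iff_desc ω
  · rw [hX1, hX2]
    refine ⟨?_, ?_, ?_, ?_, ?_⟩
    · intro i
      fin_cases i <;>
        simp only [Matrix.cons_val_zero, Matrix.cons_val_one, Matrix.head_cons] <;>
        rw [SigmaA_eq_Lx]
      · exact X1_sub_Lx
      · exact X2_sub_Lx
    · intro i
      fin_cases i <;>
        simp only [Matrix.cons_val_zero, Matrix.cons_val_one, Matrix.head_cons]
      · exact isCompact_X1
      · exact isCompact_X2
    · intro i
      fin_cases i <;>
        simp only [Matrix.cons_val_zero, Matrix.cons_val_one, Matrix.head_cons] <;>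
        rintro _ ⟨ω, hω, rfl⟩ <;> intro k <;> exact hω (k+1)
    · rw [nonwandering_eq]
      ext ω
      simp only [Set.mem_iUnion, Fin.exists_fin_two, Matrix.cons_val_zero,
        Matrix.cons_val_one, Matrix.head_cons, Set.mem_union]
    · exact spec_main
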